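/- arXiv:1412.0137 — 4 statements merged into one kernel-verified Lean document; each statement's English description precedes it below -/
import Mathlib

section
/- Let d ∈ ℕ, let p = (p₁,p₂) ∈ ℝ², and let χ = (P,Q) be a polynomial vector field with deg P ≤ d and deg Q ≤ d. If there exist d+2 pairwise distinct lines, all passing through the point p, each of which is invariant by χ, then (x−p₁)·Q(x,y) = (y−p₂)·P(x,y) identically; in particular, if χ is nonzero then χ is a central vector field (with center p) and the set of lines invariant by χ is infinite. -/
open MvPolynomial

/-- Evaluation of a bivariate polynomial at a point of `ℝ × ℝ`
(the variable `X 0` is `x`, the variable `X 1` is `y`). -/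
noncomputable def pev (P : MvPolynomial (Fin 2) ℝ) (q : ℝ × ℝ) : ℝ :=
  MvPolynomial.eval ![q.1, q.2] P

/-- The line `{(x, y) | a * x + b * y + c = 0}`. -/
def lineSet (a b c : ℝ) : Set (ℝ × ℝ) := {q : ℝ × ℝ | a * q.1 + b * q.2 + c = 0}

/-- A subset of `ℝ²` is a line if it is the zero set of an affine form
`a * x + b * y + c` with `(a, b) ≠ (0, 0)`. -/
def IsLine (L : Set (ℝ × ℝ)) : Prop :=
  ∃ a b c : ℝ, (a, b) ≠ (0, 0) ∧ L = lineSet a b c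

/-- The line `L` is invariant by the polynomial vector field `χ = P ∂x + Q ∂y`:
for a defining affine form `a * x + b * y + c` of `L`, the polynomial
`a * P + b * Q` vanishes at every point of `L`. -/
def InvLine (P Q : MvPolynomial (Fin 2) ℝ) (L : Set (ℝ × ℝ)) : Prop :=
  ∃ a b c : ℝ, (a, b) ≠ (0, 0) ∧ L = lineSet a b c ∧
    ∀ q ∈ L, a * pev P q + b * pev Q q = 0

/-- A nonzero polynomial vector field `(P, Q)` is central if there is a center
`(x₀, y₀)` with `(x - x₀) * Q = (y - y₀) * P` identically. -/
def IsCentral (P Q : MvPolynomial (Fin 2) ℝ) : Prop :=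
  (P ≠ 0 ∨ Q ≠ 0) ∧ ∃ c : ℝ × ℝ, (X 0 - C c.1) * Q = (X 1 - C c.2) * P

/-- A nonzero polynomial vector field `(P, Q)` is parallel if there is a direction
`v ≠ (0, 0)` with `v₁ * Q = v₂ * P` identically. -/
def IsParallelVF (P Q : MvPolynomial (Fin 2) ℝ) : Prop :=
  (P ≠ 0 ∨ Q ≠ 0) ∧ ∃ v : ℝ × ℝ, v ≠ (0, 0) ∧ C v.1 * Q = C v.2 * P

/-! ### Auxiliary lemmas -/

/-- Substitute `X 0 ↦ u`, `X 1 ↦ v` into a bivariate polynomial. -/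
noncomputable def lsub (u v : Polynomial ℝ) : MvPolynomial (Fin 2) ℝ →ₐ[ℝ] Polynomial ℝ :=
  MvPolynomial.aeval ![u, v]

lemma eval_lsub (u v : Polynomial ℝ) (R : MvPolynomial (Fin 2) ℝ) (t : ℝ) :
    (lsub u v R).eval t = MvPolynomial.eval ![u.eval t, v.eval t] R := by
  induction R using MvPolynomial.induction_on with
  | C a => simp [lsub]
  | add p q hp hq => simp [map_add, hp, hq]
  | mul_X p i hp =>
      simp only [map_mul, Polynomial.eval_mul, hp, MvPolynomial.eval_mul]
      congr 1
      fin_cases i <;> simp [lsub]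

lemma natDegree_lsub_le (u v : Polynomial ℝ) (hu : u.natDegree ≤ 1) (hv : v.natDegree ≤ 1)
    (R : MvPolynomial (Fin 2) ℝ) : (lsub u v R).natDegree ≤ R.totalDegree := by
  rw [lsub, MvPolynomial.aeval_def, MvPolynomial.eval₂_eq]
  refine Polynomial.natDegree_sum_le_of_forall_le _ _ fun m hm => ?_
  calc (algebraMap ℝ (Polynomial ℝ) (MvPolynomial.coeff m R) *
          ∏ i ∈ m.support, (![u, v] i) ^ m i).natDegree
      ≤ (algebraMap ℝ (Polynomial ℝ) (MvPolynomial.coeff m R)).natDegree +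
          (∏ i ∈ m.support, (![u, v] i) ^ m i).natDegree := Polynomial.natDegree_mul_le
    _ ≤ 0 + ∑ i ∈ m.support, ((![u, v] i) ^ m i).natDegree := by
        gcongr
        · exact le_of_eq (Polynomial.natDegree_C _)
        · exact Polynomial.natDegree_prod_le _ _
    _ ≤ ∑ i ∈ m.support, m i := by
        rw [zero_add]
        refine Finset.sum_le_sum fun i _ => ?_
        refine (Polynomial.natDegree_pow_le).trans ?_
        have : (![u, v] i).natDegree ≤ 1 := by fin_cases i <;> assumption
        calc m i * (![u, v] i).natDegree ≤ m i * 1 := by gcongr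
          _ = m i := mul_one _
    _ ≤ R.totalDegree := MvPolynomial.le_totalDegree hm

lemma r_zero {w1 w2 r : ℝ} (hw : ¬(w1 = 0 ∧ w2 = 0)) (h1 : w1 * r = 0) (h2 : w2 * r = 0) :
    r = 0 := by
  rcases not_and_or.mp hw with h | h
  · exact (mul_eq_zero.mp h1).resolve_left h
  · exact (mul_eq_zero.mp h2).resolve_left h

lemma det_zero {a b a' b' w1 w2 : ℝ} (hw : ¬(w1 = 0 ∧ w2 = 0))
    (h1 : a * w1 + b * w2 = 0) (h2 : a' * w1 + b' * w2 = 0) : a * b' - a' * b = 0 := by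
  refine r_zero hw ?_ ?_
  · linear_combination b' * h1 - b * h2
  · linear_combination a * h2 - a' * h1

lemma lin_transfer {a b a' b' u v : ℝ} (hab : (a, b) ≠ (0, 0))
    (hdet : a * b' - a' * b = 0) (h : a * u + b * v = 0) : a' * u + b' * v = 0 := by
  have hab' : ¬(a = 0 ∧ b = 0) := by
    intro ⟨h1, h2⟩; exact hab (by simp [h1, h2, Prod.ext_iff])
  rcases not_and_or.mp hab' with ha | hb
  · have : a * (a' * u + b' * v) = 0 := by linear_combination a' * h + v * hdet
    exact (mul_eq_zero.mp this).resolve_left ha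
  · have : b * (a' * u + b' * v) = 0 := by linear_combination b' * h - u * hdet
    exact (mul_eq_zero.mp this).resolve_left hb

lemma lineSet_eq_of_det {p : ℝ × ℝ} {a b c a' b' c' : ℝ} (hab : (a, b) ≠ (0, 0))
    (hab' : (a', b') ≠ (0, 0)) (hdet : a * b' - a' * b = 0)
    (hp : a * p.1 + b * p.2 + c = 0) (hp' : a' * p.1 + b' * p.2 + c' = 0) :
    lineSet a b c = lineSet a' b' c' := by
  ext q
  simp only [lineSet, Set.mem_setOf_eq]
  constructor
  · intro h
    have := lin_transfer hab hdet (u := q.1 - p.1) (v := q.2 - p.2) (by linarith)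
    linarith
  · intro h
    have hdet' : a' * b - a * b' = 0 := by linarith
    have := lin_transfer hab' hdet' (u := q.1 - p.1) (v := q.2 - p.2) (by linarith)
    linarith

/-- If a polynomial vector field `(P, Q)` with `deg P ≤ d`, `deg Q ≤ d` leaves
invariant `d + 2` pairwise distinct lines all passing through the point `p`, then
`(x - p₁) * Q = (y - p₂) * P` identically; in particular, if `(P, Q)` is nonzero
then it is a central vector field (with center `p`) and the set of lines invariant
by `(P, Q)` is infinite. -/
theorem concurrent_lines_force_central (d : ℕ) (p : ℝ × ℝ)
    (P Q : MvPolynomial (Fin 2) ℝ)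
    (hP : P.totalDegree ≤ d) (hQ : Q.totalDegree ≤ d)
    (L : Fin (d + 2) → Set (ℝ × ℝ)) (hLinj : Function.Injective L)
    (hLline : ∀ i, IsLine (L i)) (hLthru : ∀ i, p ∈ L i)
    (hLinv : ∀ i, InvLine P Q (L i)) :
    (X 0 - C p.1) * Q = (X 1 - C p.2) * P ∧
      ((P ≠ 0 ∨ Q ≠ 0) →
        IsCentral P Q ∧ {M : Set (ℝ × ℝ) | InvLine P Q M}.Infinite) := by
  classical
  choose a b c hab hLeq hinv using hLinv
  have hthru : ∀ i, a i * p.1 + b i * p.2 + c i = 0 := fun i => by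
    have := hLthru i
    rw [hLeq i] at this
    exact this
  have habn : ∀ i, ¬(a i = 0 ∧ b i = 0) := fun i h =>
    (hab i) (by simp [h.1, h.2, Prod.ext_iff])
  set R : MvPolynomial (Fin 2) ℝ := (X 0 - C p.1) * Q - (X 1 - C p.2) * P with hR
  have hReval : ∀ x y : ℝ, MvPolynomial.eval ![x, y] R =
      (x - p.1) * MvPolynomial.eval ![x, y] Q - (y - p.2) * MvPolynomial.eval ![x, y] P := by
    intro x y
    simp [hR]
  have hRvan : ∀ i, ∀ q ∈ L i, MvPolynomial.eval ![q.1, q.2] R = 0 := by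
    intro i q hq
    have hq' : a i * q.1 + b i * q.2 + c i = 0 := by
      rw [hLeq i] at hq; exact hq
    have h1 : a i * (q.1 - p.1) + b i * (q.2 - p.2) = 0 := by
      have := hthru i; linarith
    have h2 := hinv i q hq
    simp only [pev] at h2
    rw [hReval]
    refine r_zero (habn i) ?_ ?_
    · linear_combination MvPolynomial.eval ![q.1, q.2] Q * h1 - (q.2 - p.2) * h2
    · linear_combination (q.1 - p.1) * h2 - MvPolynomial.eval ![q.1, q.2] P * h1
  have hRdeg : R.totalDegree ≤ d + 1 := by
    rw [hR]
    refine (totalDegree_sub _ _).trans (max_le ?_ ?_)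
    · refine (totalDegree_mul _ _).trans ?_
      have h1 : (X 0 - C p.1 : MvPolynomial (Fin 2) ℝ).totalDegree ≤ 1 :=
        (totalDegree_sub _ _).trans (by simp [totalDegree_X])
      omega
    · refine (totalDegree_mul _ _).trans ?_
      have h1 : (X 1 - C p.2 : MvPolynomial (Fin 2) ℝ).totalDegree ≤ 1 :=
        (totalDegree_sub _ _).trans (by simp [totalDegree_X])
      omega
  -- choose a slope not parallel to any of the lines
  have hSfin : (⋃ i, {m : ℝ | a i + b i * m = 0}).Finite := by
    refine Set.finite_iUnion fun i => ?_
    by_cases hb : b i = 0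
    · have ha : a i ≠ 0 := fun h => habn i ⟨h, hb⟩
      convert Set.finite_empty
      ext m; simp [hb, ha]
    · apply Set.Subsingleton.finite
      intro m hm m' hm'
      simp only [Set.mem_setOf_eq] at hm hm'
      have : b i * m = b i * m' := by linarith
      exact mul_left_cancel₀ hb this
  obtain ⟨m, hmmem⟩ := hSfin.infinite_compl.nonempty
  have hmne : ∀ i, a i + b i * m ≠ 0 := fun i h => hmmem (Set.mem_iUnion.mpr ⟨i, h⟩)
  -- key vanishing claim
  have key : ∀ x y : ℝ, y - m * x ≠ p.2 - m * p.1 → MvPolynomial.eval ![x, y] R = 0 := by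
    intro x y hxy
    set cc : ℝ := y - m * x with hcc
    set F : Polynomial ℝ :=
      lsub Polynomial.X (Polynomial.C m * Polynomial.X + Polynomial.C cc) R with hF
    set t : Fin (d + 2) → ℝ := fun i => -(b i * cc + c i) / (a i + b i * m) with ht
    have htq : ∀ i, (a i + b i * m) * t i = -(b i * cc + c i) := by
      intro i
      have hne0 := hmne i
      rw [ht]
      field_simp
    have hqt : ∀ i, (t i, m * t i + cc) ∈ L i := by
      intro i
      rw [hLeq i]
      show a i * t i + b i * (m * t i + cc) + c i = 0
      linear_combination htq i
    have tinj : Function.Injective t := by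
      intro i j hij
      by_contra hne
      have hqi := hqt i
      have hqj := hqt j
      rw [← hij] at hqj
      set q : ℝ × ℝ := (t i, m * t i + cc) with hqdef
      have hqp : q ≠ p := by
        intro h
        apply hxy
        rw [hcc, ← h, hqdef]
        simp
        exact hcc.symm
      have hw : ¬(q.1 - p.1 = 0 ∧ q.2 - p.2 = 0) := by
        intro ⟨hh1, hh2⟩
        exact hqp (Prod.ext (by linarith) (by linarith))
      have hmi : a i * q.1 + b i * q.2 + c i = 0 := by rw [hLeq i] at hqi; exact hqi
      have hmj : a j * q.1 + b j * q.2 + c j = 0 := by rw [hLeq j] at hqj; exact hqj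
      have h1 : a i * (q.1 - p.1) + b i * (q.2 - p.2) = 0 := by
        have := hthru i; linarith
      have h2 : a j * (q.1 - p.1) + b j * (q.2 - p.2) = 0 := by
        have := hthru j; linarith
      have hdet := det_zero hw h1 h2
      have hLeqij : L i = L j := by
        rw [hLeq i, hLeq j]
        exact lineSet_eq_of_det (hab i) (hab j) hdet (hthru i) (hthru j)
      exact hne (hLinj hLeqij)
    have heval : ∀ i, F.eval (t i) = 0 := by
      intro i
      rw [hF, eval_lsub]
      have hsimp : (![Polynomial.X.eval (t i),
          (Polynomial.C m * Polynomial.X + Polynomial.C cc).eval (t i)] : Fin 2 → ℝ)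
          = ![t i, m * t i + cc] := by
        simp
      rw [hsimp]
      exact hRvan i (t i, m * t i + cc) (hqt i)
    have hdegF : F.natDegree < Fintype.card (Fin (d + 2)) := by
      have h1 : F.natDegree ≤ R.totalDegree := by
        rw [hF]
        refine natDegree_lsub_le _ _ (by simp) ?_ R
        refine (Polynomial.natDegree_add_le _ _).trans ?_
        simp [Polynomial.natDegree_C]
        exact (Polynomial.natDegree_mul_le).trans (by simp)
      simp only [Fintype.card_fin]
      omega
    have hF0 : F = 0 :=
      Polynomial.eq_zero_of_natDegree_lt_card_of_eval_eq_zero F tinj heval hdegF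
    have := eval_lsub Polynomial.X (Polynomial.C m * Polynomial.X + Polynomial.C cc) R x
    rw [← hF, hF0] at this
    simp only [Polynomial.eval_zero] at this
    have hyx : (![Polynomial.X.eval x,
        (Polynomial.C m * Polynomial.X + Polynomial.C cc).eval x] : Fin 2 → ℝ) = ![x, y] := by
      simp [hcc]
    rw [hyx] at this
    exact this.symm
  -- R vanishes everywhere
  have allz : ∀ v : Fin 2 → ℝ, MvPolynomial.eval v R = 0 := by
    intro v
    have hv : v = ![v 0, v 1] := by
      funext i; fin_cases i <;> simp
    rw [hv]
    set G : Polynomial ℝ := lsub (Polynomial.C (v 0)) Polynomial.X R with hG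
    have hGy : ∀ y' : ℝ, G.eval y' = MvPolynomial.eval ![v 0, y'] R := by
      intro y'
      rw [hG, eval_lsub]
      simp
    have hG0 : G = 0 := by
      apply Polynomial.eq_zero_of_infinite_isRoot
      have h1 : ({m * v 0 + (p.2 - m * p.1)}ᶜ : Set ℝ).Infinite :=
        (Set.finite_singleton _).infinite_compl
      refine h1.mono ?_
      intro y' hy'
      simp only [Set.mem_compl_iff, Set.mem_singleton_iff] at hy'
      show G.eval y' = 0
      rw [hGy]
      exact key (v 0) y' (fun h => hy' (by linarith))
    rw [← hGy (v 1), hG0, Polynomial.eval_zero]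
  have hR0 : R = 0 := MvPolynomial.funext fun v => by rw [allz v, map_zero]
  rw [hR] at hR0
  have hmain : (X 0 - C p.1) * Q = (X 1 - C p.2) * P := sub_eq_zero.mp hR0
  refine ⟨hmain, fun hne => ?_⟩
  -- P and Q vanish at the center
  have hPp : MvPolynomial.eval ![p.1, p.2] P = 0 := by
    have h0 := congrArg (lsub (Polynomial.C p.1) Polynomial.X) hmain
    simp only [map_mul, map_sub, lsub, MvPolynomial.aeval_X, MvPolynomial.aeval_C,
      Polynomial.algebraMap_eq, Matrix.cons_val_zero, Matrix.cons_val_one, Matrix.head_cons,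
      sub_self, zero_mul] at h0
    have hG0 : MvPolynomial.aeval ![Polynomial.C p.1, Polynomial.X] P = 0 := by
      rcases mul_eq_zero.mp h0.symm with h | h
      · exact absurd h (Polynomial.X_sub_C_ne_zero p.2)
      · exact h
    have := eval_lsub (Polynomial.C p.1) Polynomial.X P p.2
    rw [lsub] at this
    rw [hG0] at this
    simpa using this.symm
  have hQp : MvPolynomial.eval ![p.1, p.2] Q = 0 := by
    have h0 := congrArg (lsub Polynomial.X (Polynomial.C p.2)) hmain
    simp only [map_mul, map_sub, lsub, MvPolynomial.aeval_X, MvPolynomial.aeval_C,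
      Polynomial.algebraMap_eq, Matrix.cons_val_zero, Matrix.cons_val_one, Matrix.head_cons,
      sub_self, zero_mul] at h0
    have hG0 : MvPolynomial.aeval ![Polynomial.X, Polynomial.C p.2] Q = 0 := by
      rcases mul_eq_zero.mp h0 with h | h
      · exact absurd h (Polynomial.X_sub_C_ne_zero p.1)
      · exact h
    have := eval_lsub Polynomial.X (Polynomial.C p.2) Q p.1
    rw [lsub] at this
    rw [hG0] at this
    simpa using this.symm
  constructor
  · exact ⟨hne, p, hmain⟩
  · refine Set.infinite_of_injective_forall_mem
      (f := fun s : ℝ => lineSet 1 s (-(p.1 + s * p.2))) ?_ ?_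
    · intro s s' hss
      have hq : (p.1 - s, p.2 + 1) ∈ lineSet 1 s (-(p.1 + s * p.2)) := by
        simp only [lineSet, Set.mem_setOf_eq]
        ring
      rw [show lineSet 1 s (-(p.1 + s * p.2)) = lineSet 1 s' (-(p.1 + s' * p.2)) from hss] at hq
      simp only [lineSet, Set.mem_setOf_eq] at hq
      linarith
    · intro s
      refine ⟨1, s, -(p.1 + s * p.2), by simp, rfl, ?_⟩
      intro q hq
      simp only [lineSet, Set.mem_setOf_eq] at hq
      have h1 : (q.1 - p.1) + s * (q.2 - p.2) = 0 := by linear_combination hq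
      have hid : (q.1 - p.1) * pev Q q = (q.2 - p.2) * pev P q := by
        have := congrArg (MvPolynomial.eval ![q.1, q.2]) hmain
        simpa [pev] using this
      by_cases hqp : q = p
      · subst hqp
        simp only [pev]
        rw [hPp, hQp]
        ring
      · have hw : ¬(q.1 - p.1 = 0 ∧ q.2 - p.2 = 0) := by
          intro ⟨hh1, hh2⟩
          exact hqp (Prod.ext (by linarith) (by linarith))
        refine r_zero hw ?_ ?_
        · linear_combination pev P q * h1 + s * hid
        · linear_combination pev Q q * h1 - hid
end

section
/- Let d ∈ ℕ and let χ = (P,Q) be a polynomial vector field with deg P ≤ d and deg Q ≤ d. If there exist d+1 pairwise distinct parallel lines, all with the same normal direction (α,β) ≠ (0,0) (i.e., each defined by an equation αx+βy+γᵢ = 0), each of which is invariant by χ, then α·P + β·Q = 0 identically; in particular, if χ is nonzero then χ is a parallel vector field and the set of lines invariant by χ is infinite. -/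
open MvPolynomial

lemma natDegree_aeval_le_aux {n : ℕ} (R : MvPolynomial (Fin n) ℝ) (F : Fin n → Polynomial ℝ)
    (hF : ∀ i, (F i).natDegree ≤ 1) :
    (MvPolynomial.aeval F R).natDegree ≤ R.totalDegree := by
  rw [MvPolynomial.aeval_def, MvPolynomial.eval₂_eq]
  refine (Polynomial.natDegree_sum_le _ _).trans ?_
  rw [Finset.fold_max_le]
  refine ⟨Nat.zero_le _, fun m hm => ?_⟩
  calc (Function.comp Polynomial.natDegree
        (fun m => algebraMap ℝ (Polynomial ℝ) (R.coeff m) * ∏ i ∈ m.support, F i ^ m i)) m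
      ≤ (∏ i ∈ m.support, F i ^ m i).natDegree := by
        simp only [Function.comp, Polynomial.algebraMap_eq]
        exact Polynomial.natDegree_C_mul_le _ _
    _ ≤ ∑ i ∈ m.support, (F i ^ m i).natDegree := Polynomial.natDegree_prod_le _ _
    _ ≤ ∑ i ∈ m.support, m i := Finset.sum_le_sum fun i _ =>
        (Polynomial.natDegree_pow_le_of_le (m i) (hF i)).trans (mul_one _).le
    _ ≤ R.totalDegree := MvPolynomial.le_totalDegree hm

/-- If a polynomial vector field `(P, Q)` with `deg P ≤ d`, `deg Q ≤ d` leaves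
invariant `d + 1` pairwise distinct parallel lines, all with the same normal
direction `(a, b) ≠ (0, 0)` (the `i`-th line being `a x + b y + γ i = 0`), then
`a * P + b * Q = 0` identically; in particular, if `(P, Q)` is nonzero then it is
a parallel vector field and the set of lines invariant by `(P, Q)` is infinite. -/
theorem parallel_lines_force_parallel (d : ℕ) (a b : ℝ) (hab : (a, b) ≠ (0, 0))
    (P Q : MvPolynomial (Fin 2) ℝ)
    (hP : P.totalDegree ≤ d) (hQ : Q.totalDegree ≤ d)
    (γ : Fin (d + 1) → ℝ) (hγ : Function.Injective γ)
    (hinv : ∀ i, InvLine P Q (lineSet a b (γ i))) :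
    C a * P + C b * Q = 0 ∧
      ((P ≠ 0 ∨ Q ≠ 0) →
        IsParallelVF P Q ∧ {M : Set (ℝ × ℝ) | InvLine P Q M}.Infinite) := by
  have hab' : a ≠ 0 ∨ b ≠ 0 := by
    rcases eq_or_ne a 0 with ha | ha
    · right; intro hb; exact hab (by simp [ha, hb])
    · left; exact ha
  -- Step 1: R vanishes on every one of the given lines, with the normal form (a,b).
  have hline : ∀ i, ∀ q ∈ lineSet a b (γ i), a * pev P q + b * pev Q q = 0 := by
    intro i
    obtain ⟨a', b', c', hne', hEq, hv⟩ := hinv i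
    -- find proportionality: b' * a = a' * b
    have h2 : b' * a = a' * b := by
      rcases hab' with ha | hb
      · have hq0 : ((-(γ i) / a, 0) : ℝ × ℝ) ∈ lineSet a b (γ i) := by
          simp only [lineSet, Set.mem_setOf_eq]; field_simp; try ring
        have hq1 : ((-(γ i) / a - b, (0:ℝ) + a) : ℝ × ℝ) ∈ lineSet a b (γ i) := by
          simp only [lineSet, Set.mem_setOf_eq]; field_simp; try ring
        rw [hEq] at hq0 hq1
        simp only [lineSet, Set.mem_setOf_eq] at hq0 hq1
        linear_combination hq1 - hq0
      · have hq0 : ((0, -(γ i) / b) : ℝ × ℝ) ∈ lineSet a b (γ i) := by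
          simp only [lineSet, Set.mem_setOf_eq]; field_simp; try ring
        have hq1 : (((0:ℝ) - b, -(γ i) / b + a) : ℝ × ℝ) ∈ lineSet a b (γ i) := by
          simp only [lineSet, Set.mem_setOf_eq]; field_simp; try ring
        rw [hEq] at hq0 hq1
        simp only [lineSet, Set.mem_setOf_eq] at hq0 hq1
        linear_combination hq1 - hq0
    intro q hq
    have h1 := hv q hq
    have hne2 : a' ≠ 0 ∨ b' ≠ 0 := by
      rcases eq_or_ne a' 0 with h | h
      · right; intro h'; exact hne' (by simp [h, h'])
      · left; exact h
    rcases hab' with ha | hb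
    · have ha' : a' ≠ 0 := by
        intro h; rcases hne2 with h' | h'
        · exact h' h
        · exact h' (by
            have : b' * a = 0 := by rw [h2, h]; ring
            exact (mul_eq_zero.mp this).resolve_right ha)
      have key : a' * (a * pev P q + b * pev Q q) = 0 := by
        linear_combination a * h1 - pev Q q * h2
      exact (mul_eq_zero.mp key).resolve_left ha'
    · have hb' : b' ≠ 0 := by
        intro h; rcases hne2 with h' | h'
        · exact h' (by
            have : a' * b = 0 := by rw [← h2, h]; ring
            exact (mul_eq_zero.mp this).resolve_right hb)
        · exact h' h
      have key : b' * (a * pev P q + b * pev Q q) = 0 := by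
        linear_combination b * h1 + pev P q * h2
      exact (mul_eq_zero.mp key).resolve_left hb'
  -- Step 2: R = C a * P + C b * Q evaluates to 0 everywhere.
  set Rp : MvPolynomial (Fin 2) ℝ := C a * P + C b * Q with hRp
  have hRd : Rp.totalDegree ≤ d := by
    refine (MvPolynomial.totalDegree_add _ _).trans (max_le ?_ ?_)
    · exact (MvPolynomial.totalDegree_mul _ _).trans
        (by simpa [MvPolynomial.totalDegree_C] using hP)
    · exact (MvPolynomial.totalDegree_mul _ _).trans
        (by simpa [MvPolynomial.totalDegree_C] using hQ)
  have hs : a ^ 2 + b ^ 2 ≠ 0 := by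
    rcases hab' with h | h <;> positivity
  have hzero_eval : ∀ x : Fin 2 → ℝ, MvPolynomial.eval x Rp = 0 := by
    intro x
    set s : ℝ := a ^ 2 + b ^ 2 with hsdef
    set F : Fin 2 → Polynomial ℝ :=
      ![Polynomial.C (x 0) + Polynomial.C a * Polynomial.X,
        Polynomial.C (x 1) + Polynomial.C b * Polynomial.X] with hF
    have hFdeg : ∀ j, (F j).natDegree ≤ 1 := by
      intro j
      fin_cases j <;>
      · refine (Polynomial.natDegree_add_le _ _).trans (max_le (by simp) ?_)
        exact (Polynomial.natDegree_C_mul_le _ _).trans Polynomial.natDegree_X_le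
    set g : Polynomial ℝ := MvPolynomial.aeval F Rp with hg
    have hcomp : ∀ τ : ℝ, Polynomial.eval τ g =
        MvPolynomial.eval (fun j => Polynomial.eval τ (F j)) Rp := by
      intro τ
      have := MvPolynomial.comp_aeval_apply (Polynomial.aeval τ) (f := F) Rp
      simp only [Polynomial.coe_aeval_eq_eval] at this
      exact this
    set t : Fin (d + 1) → ℝ := fun i => -((a * x 0 + b * x 1 + γ i) / s) with ht
    have htinj : Function.Injective t := by
      intro i j hij
      apply hγ
      simp only [ht, neg_inj] at hij
      rw [div_left_inj' hs] at hij
      linarith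
    have heval : ∀ i, Polynomial.eval (t i) g = 0 := by
      intro i
      rw [hcomp]
      set pt : Fin 2 → ℝ := fun j => Polynomial.eval (t i) (F j) with hpt
      have hpt0 : pt 0 = x 0 + a * t i := by simp [hpt, hF]
      have hpt1 : pt 1 = x 1 + b * t i := by simp [hpt, hF]
      have hmem : ((pt 0, pt 1) : ℝ × ℝ) ∈ lineSet a b (γ i) := by
        simp only [lineSet, Set.mem_setOf_eq, hpt0, hpt1, ht]
        field_simp
        ring
      have := hline i (pt 0, pt 1) hmem
      have hvec : (![pt 0, pt 1] : Fin 2 → ℝ) = pt := by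
        funext j; fin_cases j <;> simp
      simp only [pev, hvec] at this
      simp only [hRp, map_add, map_mul, MvPolynomial.eval_C]
      linarith [this]
    have hgz : g = 0 := by
      refine Polynomial.eq_zero_of_natDegree_lt_card_of_eval_eq_zero g htinj heval ?_
      have : g.natDegree ≤ d := (natDegree_aeval_le_aux Rp F hFdeg).trans hRd
      simpa using Nat.lt_succ_of_le this
    have h0 := hcomp 0
    rw [hgz] at h0
    have hx : (fun j => Polynomial.eval 0 (F j)) = x := by
      funext j; fin_cases j <;> simp [hF]
    rw [hx] at h0
    simpa using h0.symm
  have hzero : Rp = 0 := by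
    apply MvPolynomial.funext
    intro x
    simp [hzero_eval x]
  refine ⟨hzero, fun hne => ?_⟩
  constructor
  · refine ⟨hne, (b, -a), ?_, ?_⟩
    · intro h
      rw [Prod.mk.injEq] at h
      exact hab (by simp [h.1, neg_eq_zero.mp h.2])
    · have hCa : (C (-a) : MvPolynomial (Fin 2) ℝ) = - C a := by simp
      simp only [hCa]
      linear_combination hzero
  · apply Set.infinite_of_injective_forall_mem (f := fun c : ℝ => lineSet a b c)
    · intro c c' h
      dsimp only at h
      rcases hab' with ha | hb
      · have hq : ((-c / a, 0) : ℝ × ℝ) ∈ lineSet a b c := by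
          simp only [lineSet, Set.mem_setOf_eq]; field_simp; try ring
        rw [h] at hq
        simp only [lineSet, Set.mem_setOf_eq] at hq
        field_simp at hq
        have h3 : a * c = a * c' := by linear_combination -a * hq
        exact mul_left_cancel₀ ha h3
      · have hq : ((0, -c / b) : ℝ × ℝ) ∈ lineSet a b c := by
          simp only [lineSet, Set.mem_setOf_eq]; field_simp; try ring
        rw [h] at hq
        simp only [lineSet, Set.mem_setOf_eq] at hq
        field_simp at hq
        have h3 : b * c = b * c' := by linear_combination -b * hq
        exact mul_left_cancel₀ hb h3
    · intro c
      refine ⟨a, b, c, hab, rfl, fun q _ => ?_⟩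
      have := hzero_eval ![q.1, q.2]
      simp only [hRp, map_add, map_mul, MvPolynomial.eval_C] at this
      simpa [pev] using this
end

section
/- Let A be a line arrangement in ℝ², let m(A) be the maximal number of lines of A passing through a common point, let p(A) be the maximal number of pairwise parallel lines in A, and set ν_∞(A) = max{m(A)−1, p(A)}. If d < ν_∞(A), then every polynomial vector field χ = (P,Q) with deg P ≤ d, deg Q ≤ d that fixes every line of A has an infinite set of invariant lines (i.e., D_d(A) = D_d^∞(A)). -/
open MvPolynomial

open scoped Classical in
/-- The number of lines of the arrangement `A` passing through the point `q`. -/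
noncomputable def numThrough (A : Finset (Set (ℝ × ℝ))) (q : ℝ × ℝ) : ℕ :=
  (A.filter (fun L => q ∈ L)).card

/-- `mArr A` is the maximal number of lines of `A` passing through a common point. -/
noncomputable def mArr (A : Finset (Set (ℝ × ℝ))) : ℕ :=
  sSup (Set.range (numThrough A))

/-- Two lines are parallel if they are equal or disjoint. -/
def ParLines (L L' : Set (ℝ × ℝ)) : Prop := L = L' ∨ L ∩ L' = ∅

/-- `pArr A` is the maximal number of pairwise parallel lines in `A`. -/
noncomputable def pArr (A : Finset (Set (ℝ × ℝ))) : ℕ :=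
  sSup {k : ℕ | ∃ S : Finset (Set (ℝ × ℝ)), S ⊆ A ∧
    (∀ L ∈ S, ∀ L' ∈ S, ParLines L L') ∧ S.card = k}

section Helpers
open Polynomial

lemma mem_lineSet {a b c : ℝ} {q : ℝ × ℝ} : q ∈ lineSet a b c ↔ a * q.1 + b * q.2 + c = 0 :=
  Iff.rfl

lemma sq_sum_ne {a b : ℝ} (h : (a, b) ≠ ((0:ℝ), (0:ℝ))) : a ^ 2 + b ^ 2 ≠ 0 := by
  intro h2
  exact h (by
    have ha : a = 0 := by nlinarith [sq_nonneg a, sq_nonneg b]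
    have hb : b = 0 := by nlinarith [sq_nonneg a, sq_nonneg b]
    simp [ha, hb])

/-- kernel of a nonzero linear form in 2 variables -/
lemma kernel2 {a b u v : ℝ} (hab : (a, b) ≠ ((0:ℝ), (0:ℝ))) (h : a * u + b * v = 0) :
    ∃ s : ℝ, u = -s * b ∧ v = s * a := by
  have hd := sq_sum_ne hab
  refine ⟨(a * v - b * u) / (a ^ 2 + b ^ 2), ?_, ?_⟩
  · field_simp
    linear_combination a * h
  · field_simp
    linear_combination b * h

/-- zero determinant and nonzero rows ⇒ proportional -/
lemma det_zero_prop {a b a' b' : ℝ} (hab : (a, b) ≠ ((0:ℝ), (0:ℝ)))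
    (hab' : (a', b') ≠ ((0:ℝ), (0:ℝ))) (h : a * b' - a' * b = 0) :
    ∃ k : ℝ, k ≠ 0 ∧ a' = k * a ∧ b' = k * b := by
  have hd := sq_sum_ne hab
  refine ⟨(a * a' + b * b') / (a ^ 2 + b ^ 2), ?_, ?_, ?_⟩
  · intro hk
    have h1 : a * a' + b * b' = 0 := by
      field_simp at hk; simpa using hk
    apply hab'
    have ha' : a' * (a ^ 2 + b ^ 2) = 0 := by linear_combination a * h1 - b * h
    have hb' : b' * (a ^ 2 + b ^ 2) = 0 := by linear_combination b * h1 + a * h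
    rcases mul_eq_zero.mp ha' with h2 | h2
    · rcases mul_eq_zero.mp hb' with h3 | h3
      · simp [h2, h3]
      · exact absurd h3 hd
    · exact absurd h2 hd
  · field_simp
    linear_combination (-b) * h
  · field_simp
    linear_combination a * h

lemma lineSet_scale {a b c k : ℝ} (hk : k ≠ 0) : lineSet (k*a) (k*b) (k*c) = lineSet a b c := by
  ext q
  simp only [mem_lineSet, Set.mem_setOf_eq, lineSet]
  constructor
  · intro h
    have : k * (a * q.1 + b * q.2 + c) = 0 := by linarith [h]
    rcases mul_eq_zero.mp this with h | h
    · exact absurd h hk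
    · exact h
  · intro h
    have : k * (a * q.1 + b * q.2 + c) = 0 := by rw [h]; ring
    linarith [this]

/-- a point on any line -/
lemma exists_mem_lineSet {a b : ℝ} (hab : (a, b) ≠ ((0:ℝ), (0:ℝ))) (c : ℝ) :
    (-c * a / (a ^ 2 + b ^ 2), -c * b / (a ^ 2 + b ^ 2)) ∈ lineSet a b c := by
  have hd := sq_sum_ne hab
  rw [mem_lineSet]
  field_simp
  ring

lemma lineSet_c_inj {a b c c' : ℝ} (hab : (a, b) ≠ ((0:ℝ), (0:ℝ)))
    (h : lineSet a b c = lineSet a b c') : c = c' := by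
  have h1 := exists_mem_lineSet hab c
  have h2 : _ ∈ lineSet a b c' := h ▸ h1
  rw [mem_lineSet] at h1 h2
  linarith

/-- two distinct common points force proportional forms -/
lemma prop_of_two_points {a b c a' b' c' : ℝ} (hab : (a, b) ≠ ((0:ℝ), (0:ℝ)))
    (hab' : (a', b') ≠ ((0:ℝ), (0:ℝ))) {p p' : ℝ × ℝ} (hne : p ≠ p')
    (h1 : p ∈ lineSet a b c) (h2 : p' ∈ lineSet a b c)
    (h3 : p ∈ lineSet a' b' c') (h4 : p' ∈ lineSet a' b' c') :
    ∃ k : ℝ, k ≠ 0 ∧ a' = k * a ∧ b' = k * b ∧ c' = k * c := by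
  rw [mem_lineSet] at h1 h2 h3 h4
  set u := p.1 - p'.1 with hu
  set v := p.2 - p'.2 with hv
  have huv : u ≠ 0 ∨ v ≠ 0 := by
    by_contra hc
    push_neg at hc
    exact hne (Prod.ext (by simp only [hu] at hc; linarith [hc.1]) (by simp only [hv] at hc; linarith [hc.2]))
  have e1 : a * u + b * v = 0 := by simp only [hu, hv]; ring_nf; linarith
  have e2 : a' * u + b' * v = 0 := by simp only [hu, hv]; ring_nf; linarith
  have hdet : a * b' - a' * b = 0 := by
    have g1 : (a * b' - a' * b) * u = 0 := by linear_combination b' * e1 - b * e2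
    have g2 : (a * b' - a' * b) * v = 0 := by linear_combination (-a') * e1 + a * e2
    rcases huv with h | h
    · rcases mul_eq_zero.mp g1 with g | g
      · exact g
      · exact absurd g h
    · rcases mul_eq_zero.mp g2 with g | g
      · exact g
      · exact absurd g h
  obtain ⟨k, hk, ha, hb⟩ := det_zero_prop hab hab' hdet
  refine ⟨k, hk, ha, hb, ?_⟩
  have : k * a * p.1 + k * b * p.2 + c' = 0 := by rw [← ha, ← hb]; exact h3
  have h5 : k * (a * p.1 + b * p.2) = -c' := by linarith
  have h6 : a * p.1 + b * p.2 = -c := by linarith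
  rw [h6] at h5; linarith

lemma two_points_lineSet {a b c a' b' c' : ℝ} (hab : (a, b) ≠ ((0:ℝ), (0:ℝ)))
    (hab' : (a', b') ≠ ((0:ℝ), (0:ℝ))) {p p' : ℝ × ℝ} (hne : p ≠ p')
    (h1 : p ∈ lineSet a b c) (h2 : p' ∈ lineSet a b c)
    (h3 : p ∈ lineSet a' b' c') (h4 : p' ∈ lineSet a' b' c') :
    lineSet a b c = lineSet a' b' c' := by
  obtain ⟨k, hk, ha, hb, hc⟩ := prop_of_two_points hab hab' hne h1 h2 h3 h4
  rw [ha, hb, hc, lineSet_scale hk]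

/-- disjoint lines have proportional normals -/
lemma disjoint_lines_prop {a b c a' b' c' : ℝ} (hab : (a, b) ≠ ((0:ℝ), (0:ℝ)))
    (hab' : (a', b') ≠ ((0:ℝ), (0:ℝ))) (h : lineSet a b c ∩ lineSet a' b' c' = ∅) :
    ∃ k : ℝ, k ≠ 0 ∧ a' = k * a ∧ b' = k * b := by
  have hdet : a * b' - a' * b = 0 := by
    by_contra hD
    have : ((b * c' - b' * c) / (a * b' - a' * b), (a' * c - a * c') / (a * b' - a' * b)) ∈
        lineSet a b c ∩ lineSet a' b' c' := by
      have hi : (a * b' - a' * b) * (a * b' - a' * b)⁻¹ = 1 := mul_inv_cancel₀ hD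
      constructor <;> rw [mem_lineSet]
      · linear_combination (-c) * hi
      · linear_combination (-c') * hi
    rw [h] at this
    exact this
  exact det_zero_prop hab hab' hdet

/-- equal lines have proportional forms -/
lemma eq_lineSet_prop {a b c a' b' c' : ℝ} (hab : (a, b) ≠ ((0:ℝ), (0:ℝ)))
    (hab' : (a', b') ≠ ((0:ℝ), (0:ℝ))) (h : lineSet a b c = lineSet a' b' c') :
    ∃ k : ℝ, k ≠ 0 ∧ a' = k * a ∧ b' = k * b := by
  have hd := sq_sum_ne hab
  set p : ℝ × ℝ := (-c * a / (a ^ 2 + b ^ 2), -c * b / (a ^ 2 + b ^ 2)) with hp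
  have h1 : p ∈ lineSet a b c := exists_mem_lineSet hab c
  set p' : ℝ × ℝ := (p.1 - b, p.2 + a) with hp'
  have h2 : p' ∈ lineSet a b c := by
    rw [mem_lineSet] at h1 ⊢
    show a * (p.1 - b) + b * (p.2 + a) + c = 0
    ring_nf
    ring_nf at h1
    linarith
  have hne : p ≠ p' := by
    intro he
    have e1 : p.1 = p.1 - b := congrArg Prod.fst he
    have e2 : p.2 = p.2 + a := congrArg Prod.snd he
    exact hab (by
      have ha : a = 0 := by linarith
      have hb : b = 0 := by linarith
      simp [ha, hb])
  have h3 : p ∈ lineSet a' b' c' := by rw [← h]; exact h1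
  have h4 : p' ∈ lineSet a' b' c' := by rw [← h]; exact h2
  obtain ⟨k, hk, ha, hb, -⟩ := prop_of_two_points hab hab' hne h1 h2 h3 h4
  exact ⟨k, hk, ha, hb⟩

/-- restriction of a bivariate polynomial to a parametrized line -/
noncomputable def lineComp (P : MvPolynomial (Fin 2) ℝ) (q v : ℝ × ℝ) : Polynomial ℝ :=
  MvPolynomial.aeval ![Polynomial.C q.1 + Polynomial.C v.1 * Polynomial.X,
    Polynomial.C q.2 + Polynomial.C v.2 * Polynomial.X] P

lemma lineComp_eval (P : MvPolynomial (Fin 2) ℝ) (q v : ℝ × ℝ) (t : ℝ) :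
    (lineComp P q v).eval t = pev P (q.1 + t * v.1, q.2 + t * v.2) := by
  induction P using MvPolynomial.induction_on with
  | C a => simp [lineComp, pev]
  | add p r hp hr => simp only [lineComp, pev, map_add, Polynomial.eval_add] at *; rw [hp, hr]
  | mul_X p n hp =>
    simp only [lineComp, pev, map_mul, Polynomial.eval_mul] at *
    rw [hp]
    congr 1
    fin_cases n <;> simp <;> ring

lemma lineComp_natDegree_le (P : MvPolynomial (Fin 2) ℝ) (q v : ℝ × ℝ) :
    (lineComp P q v).natDegree ≤ P.totalDegree := by
  set f : Fin 2 → Polynomial ℝ := ![Polynomial.C q.1 + Polynomial.C v.1 * Polynomial.X,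
    Polynomial.C q.2 + Polynomial.C v.2 * Polynomial.X] with hf
  have hf1 : ∀ i, (f i).natDegree ≤ 1 := by
    intro i
    have hb : ∀ r s : ℝ, (Polynomial.C r + Polynomial.C s * Polynomial.X).natDegree ≤ 1 := by
      intro r s
      refine (Polynomial.natDegree_add_le _ _).trans (max_le (by simp) ?_)
      exact (Polynomial.natDegree_C_mul_le _ _).trans (by simp)
    fin_cases i
    · simpa [hf] using hb q.1 v.1
    · simpa [hf] using hb q.2 v.2
  have : lineComp P q v = ∑ u ∈ P.support, MvPolynomial.aeval f (monomial u (coeff u P)) := by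
    rw [lineComp, ← map_sum, ← MvPolynomial.as_sum]
  rw [this]
  apply Polynomial.natDegree_sum_le_of_forall_le
  intro u hu
  rw [MvPolynomial.aeval_monomial]
  refine (Polynomial.natDegree_mul_le).trans ?_
  have h1 : (algebraMap ℝ (Polynomial ℝ) (coeff u P)).natDegree = 0 := Polynomial.natDegree_C _
  rw [h1, zero_add]
  have h2 : (u.prod fun i n => f i ^ n).natDegree ≤ ∑ i ∈ u.support, u i := by
    rw [Finsupp.prod]
    refine (Polynomial.natDegree_prod_le _ _).trans ?_
    apply Finset.sum_le_sum
    intro i _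
    exact Polynomial.natDegree_pow_le.trans (by
      calc u i * (f i).natDegree ≤ u i * 1 := Nat.mul_le_mul_left _ (hf1 i)
      _ = u i := Nat.mul_one _)
  exact h2.trans (MvPolynomial.le_totalDegree hu)

/-- a polynomial of degree ≤ d vanishing on more than d parallel lines vanishes identically -/
lemma vanish_of_parallel (R : MvPolynomial (Fin 2) ℝ) (d : ℕ) (hR : R.totalDegree ≤ d)
    {a b : ℝ} (hab : (a, b) ≠ ((0:ℝ), (0:ℝ))) (cs : Finset ℝ) (hcard : d < cs.card)
    (hv : ∀ c ∈ cs, ∀ q ∈ lineSet a b c, pev R q = 0) (q : ℝ × ℝ) : pev R q = 0 := by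
  have hden := sq_sum_ne hab
  set φ := lineComp R q (a, b) with hφ
  have hdeg : φ.natDegree ≤ d := (lineComp_natDegree_le _ _ _).trans hR
  set g : ℝ → ℝ := fun c => -(a * q.1 + b * q.2 + c) / (a ^ 2 + b ^ 2) with hg
  have hginj : Function.Injective g := by
    intro c c' h
    simp only [hg, div_eq_div_iff hden hden] at h
    have := mul_right_cancel₀ hden h
    linarith
  have heval : ∀ t ∈ cs.image g, φ.eval t = 0 := by
    intro t ht
    obtain ⟨c, hc, rfl⟩ := Finset.mem_image.mp ht
    rw [hφ, lineComp_eval]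
    apply hv c hc
    rw [mem_lineSet]
    simp only [hg]
    field_simp
    ring
  have hc2 : φ.natDegree < (cs.image g).card := by
    rw [Finset.card_image_of_injective _ hginj]; omega
  have hz := Polynomial.eq_zero_of_natDegree_lt_card_of_eval_eq_zero' φ _ heval hc2
  have : pev R q = φ.eval 0 := by
    rw [hφ, lineComp_eval]; norm_num
  rw [this, hz, Polynomial.eval_zero]

end Helpers

/-- **Theorem.** Let `A` be a line arrangement and `ν_∞(A) = max (m(A) - 1) (p(A))`.
If `d < ν_∞(A)`, then every polynomial vector field `(P, Q)` with `deg P ≤ d`,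
`deg Q ≤ d` fixing every line of `A` has an infinite set of invariant lines,
i.e. `D_d(A) = D_d^∞(A)`. -/
theorem low_degree_fixing_is_infinite_type
    (A : Finset (Set (ℝ × ℝ))) (hA : ∀ L ∈ A, IsLine L) (d : ℕ)
    (hd : d < max (mArr A - 1) (pArr A))
    (P Q : MvPolynomial (Fin 2) ℝ)
    (hP : P.totalDegree ≤ d) (hQ : Q.totalDegree ≤ d)
    (hfix : ∀ L ∈ A, InvLine P Q L) :
    {M : Set (ℝ × ℝ) | InvLine P Q M}.Infinite := by
  classical
  rcases lt_max_iff.mp hd with hm | hp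
  · -- concurrent case
    have hm2 : d + 1 < mArr A := by omega
    have hexq : ∃ q : ℝ × ℝ, d + 1 < numThrough A q := by
      by_contra hcon
      push_neg at hcon
      have : mArr A ≤ d + 1 := csSup_le (Set.range_nonempty _) (by rintro k ⟨q, rfl⟩; exact hcon q)
      omega
    obtain ⟨q0, hq0⟩ := hexq
    set T := A.filter (fun L => q0 ∈ L) with hT
    have hTcard : d + 1 < T.card := by
      have he : numThrough A q0 = T.card := by
        rw [numThrough, hT]
      omega
    have hmemT : ∀ L ∈ T, L ∈ A ∧ q0 ∈ L := fun L hL => by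
      rw [hT, Finset.mem_filter] at hL; exact hL
    have key : ∀ L ∈ T, ∃ a b c : ℝ, (a, b) ≠ ((0:ℝ), (0:ℝ)) ∧ L = lineSet a b c ∧
        (∀ q ∈ L, a * pev P q + b * pev Q q = 0) := fun L hL => hfix L (hmemT L hL).1
    choose af bf cf habf hleqf hvf using key
    set W := (X 0 - MvPolynomial.C q0.1) * Q - (X 1 - MvPolynomial.C q0.2) * P with hWdef
    have hWpev : ∀ p : ℝ × ℝ, pev W p = (p.1 - q0.1) * pev Q p - (p.2 - q0.2) * pev P p := by
      intro p
      simp [pev, hWdef]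
    have hWdeg : W.totalDegree ≤ d + 1 := by
      have h1 : ∀ (i : Fin 2) (r : ℝ), (X i - MvPolynomial.C r : MvPolynomial (Fin 2) ℝ).totalDegree ≤ 1 := by
        intro i r
        refine (totalDegree_sub _ _).trans (max_le ?_ ?_) <;> simp [totalDegree_X, totalDegree_C]
      refine (totalDegree_sub _ _).trans (max_le ?_ ?_) <;>
        refine (totalDegree_mul _ _).trans ?_
      · exact (add_le_add (h1 0 q0.1) hQ).trans (by omega)
      · exact (add_le_add (h1 1 q0.2) hP).trans (by omega)
    have hWlines : ∀ L, ∀ hL : L ∈ T, ∀ p ∈ L, pev W p = 0 := by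
      intro L hL p hp
      have h1 := (hmemT L hL).2
      have hLeq := hleqf L hL
      rw [hLeq, mem_lineSet] at hp h1
      obtain ⟨s, hs1, hs2⟩ := kernel2 (habf L hL)
        (u := p.1 - q0.1) (v := p.2 - q0.2) (by linarith)
      rw [hWpev, hs1, hs2]
      have h2 := hvf L hL p (by rw [hLeq, mem_lineSet]; linarith [hp])
      linear_combination (-s) * h2
    have hW0 : ∀ p : ℝ × ℝ, pev W p = 0 := by
      intro p
      by_cases hp0 : p = q0
      · rw [hp0, hWpev]; ring
      · obtain ⟨s, hs⟩ := Infinite.exists_notMem_finset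
          ((T.attach.image fun L => -(af L.1 L.2) / (bf L.1 L.2)) ∪
            {(q0.2 - p.2) / (q0.1 - p.1)})
        have hsden : ∀ (L) (hL : L ∈ T), af L hL + bf L hL * s ≠ 0 := by
          intro L hL h
          by_cases hb : bf L hL = 0
          · have ha0 : af L hL = 0 := by rw [hb] at h; linarith
            exact habf L hL (by rw [ha0, hb])
          · apply hs
            apply Finset.mem_union_left
            refine Finset.mem_image.mpr ⟨⟨L, hL⟩, Finset.mem_attach _ _, ?_⟩
            field_simp
            linarith
        have hmiss : ∀ t : ℝ, (p.1 + t * 1, p.2 + t * s) ≠ q0 := by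
          intro t h
          have h1 : p.1 + t = q0.1 := by simpa using congrArg Prod.fst h
          have h2 : p.2 + t * s = q0.2 := by simpa using congrArg Prod.snd h
          by_cases hx : q0.1 = p.1
          · have ht : t = 0 := by linarith
            rw [ht] at h2
            exact hp0 (Prod.ext (by linarith) (by linarith))
          · apply hs
            apply Finset.mem_union_right
            rw [Finset.mem_singleton]
            have hden : q0.1 - p.1 ≠ 0 := sub_ne_zero.mpr hx
            have ht : t = q0.1 - p.1 := by linarith
            rw [eq_div_iff hden]
            rw [ht] at h2
            linear_combination h2
        set tf : (L : Set (ℝ × ℝ)) → L ∈ T → ℝ := fun L hL =>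
          -(af L hL * p.1 + bf L hL * p.2 + cf L hL) / (af L hL + bf L hL * s) with htf
        have hptmem' : ∀ (L) (hL : L ∈ T), (p.1 + tf L hL * 1, p.2 + tf L hL * s) ∈
            lineSet (af L hL) (bf L hL) (cf L hL) := by
          intro L hL
          rw [mem_lineSet]
          simp only [htf]
          field_simp [hsden L hL]
          ring
        have hptmem : ∀ (L) (hL : L ∈ T), (p.1 + tf L hL * 1, p.2 + tf L hL * s) ∈ L := by
          intro L hL
          have h2 := hptmem' L hL
          rw [← hleqf L hL] at h2
          exact h2
        set φ := lineComp W p (1, s) with hφ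
        have hdeg : φ.natDegree ≤ d + 1 := (lineComp_natDegree_le _ _ _).trans hWdeg
        have hinj : Function.Injective (fun L : {x // x ∈ T} => tf L.1 L.2) := by
          rintro ⟨L1, hL1⟩ ⟨L2, hL2⟩ h
          simp only at h
          apply Subtype.ext
          show L1 = L2
          have m1 := hptmem' L1 hL1
          have m2 := hptmem' L2 hL2
          rw [← h] at m2
          have hq01 := (hmemT L1 hL1).2
          have hq02 := (hmemT L2 hL2).2
          rw [hleqf L1 hL1] at hq01
          rw [hleqf L2 hL2] at hq02
          rw [hleqf L1 hL1, hleqf L2 hL2]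
          exact two_points_lineSet (habf L1 hL1) (habf L2 hL2) (hmiss _) m1 hq01 m2 hq02
        set ts := T.attach.image (fun L : {x // x ∈ T} => tf L.1 L.2) with hts
        have hcardts : φ.natDegree < ts.card := by
          rw [hts, Finset.card_image_of_injective _ hinj, Finset.card_attach]
          omega
        have heval : ∀ t ∈ ts, φ.eval t = 0 := by
          intro t ht
          obtain ⟨⟨L, hL⟩, -, rfl⟩ := Finset.mem_image.mp ht
          rw [hφ, lineComp_eval]
          exact hWlines L hL _ (hptmem L hL)
        have hz := Polynomial.eq_zero_of_natDegree_lt_card_of_eval_eq_zero' φ ts heval hcardts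
        have hev0 : pev W p = φ.eval 0 := by
          rw [hφ, lineComp_eval]; norm_num
        rw [hev0, hz, Polynomial.eval_zero]
    have hsing : pev P q0 = 0 ∧ pev Q q0 = 0 := by
      have h2 : 1 < T.card := by omega
      obtain ⟨L1, hL1, L2, hL2, hne⟩ := Finset.one_lt_card.mp h2
      have e1 := hvf L1 hL1 q0 (hmemT L1 hL1).2
      have e2 := hvf L2 hL2 q0 (hmemT L2 hL2).2
      have m1 : af L1 hL1 * q0.1 + bf L1 hL1 * q0.2 + cf L1 hL1 = 0 := by
        have := (hmemT L1 hL1).2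
        rw [hleqf L1 hL1, mem_lineSet] at this
        exact this
      have m2 : af L2 hL2 * q0.1 + bf L2 hL2 * q0.2 + cf L2 hL2 = 0 := by
        have := (hmemT L2 hL2).2
        rw [hleqf L2 hL2, mem_lineSet] at this
        exact this
      have hdet : af L1 hL1 * bf L2 hL2 - af L2 hL2 * bf L1 hL1 ≠ 0 := by
        intro h
        obtain ⟨k, hk, ha, hb⟩ := det_zero_prop (habf L1 hL1) (habf L2 hL2) h
        apply hne
        have hc : cf L2 hL2 = k * cf L1 hL1 := by
          rw [ha, hb] at m2
          linear_combination m2 - k * m1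
        rw [hleqf L1 hL1, hleqf L2 hL2, ha, hb, hc, lineSet_scale hk]
      constructor
      · have hh : pev P q0 * (af L1 hL1 * bf L2 hL2 - af L2 hL2 * bf L1 hL1) = 0 := by
          linear_combination bf L2 hL2 * e1 - bf L1 hL1 * e2
        rcases mul_eq_zero.mp hh with h | h
        · exact h
        · exact absurd h hdet
      · have hh : pev Q q0 * (af L1 hL1 * bf L2 hL2 - af L2 hL2 * bf L1 hL1) = 0 := by
          linear_combination af L1 hL1 * e2 - af L2 hL2 * e1
        rcases mul_eq_zero.mp hh with h | h
        · exact h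
        · exact absurd h hdet
    apply Set.infinite_of_injective_forall_mem
      (f := fun u : ℝ => lineSet u 1 (-(u * q0.1 + q0.2)))
    · intro u u' h
      have hm1 : (q0.1 - 1, q0.2 + u) ∈ lineSet u 1 (-(u * q0.1 + q0.2)) := by
        rw [mem_lineSet]; ring
      have h' : lineSet u 1 (-(u * q0.1 + q0.2)) = lineSet u' 1 (-(u' * q0.1 + q0.2)) := h
      rw [h', mem_lineSet] at hm1
      simp only at hm1
      linarith
    · intro u
      show InvLine P Q (lineSet u 1 (-(u * q0.1 + q0.2)))
      refine ⟨u, 1, -(u * q0.1 + q0.2), by simp, rfl, ?_⟩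
      intro q hq
      rw [mem_lineSet] at hq
      obtain ⟨σ, hσ1, hσ2⟩ := kernel2 (a := u) (b := 1) (by simp)
        (u := q.1 - q0.1) (v := q.2 - q0.2) (by linarith)
      have hW := hW0 q
      rw [hWpev] at hW
      by_cases hσ : σ = 0
      · have h1 : q.1 = q0.1 := by rw [hσ] at hσ1; linarith
        have h2 : q.2 = q0.2 := by rw [hσ] at hσ2; linarith
        rw [Prod.ext h1 h2, hsing.1, hsing.2]
        ring
      · have hcomb : σ * (u * pev P q + 1 * pev Q q) = 0 := by
          linear_combination pev Q q * hσ1 - pev P q * hσ2 - hW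
        rcases mul_eq_zero.mp hcomb with h | h
        · exact absurd h hσ
        · linarith
  · -- parallel case
    have hex : ∃ S : Finset (Set (ℝ × ℝ)), S ⊆ A ∧ (∀ L ∈ S, ∀ L' ∈ S, ParLines L L') ∧
        d < S.card := by
      by_contra hcon
      push_neg at hcon
      have hle : pArr A ≤ d := by
        refine csSup_le ⟨0, ∅, by simp, by simp, rfl⟩ ?_
        rintro k ⟨S, hSA, hparS, rfl⟩
        exact hcon S hSA hparS
      omega
    obtain ⟨S, hSA, hparS, hcard⟩ := hex
    have hS0 : S.Nonempty := Finset.card_pos.mp (by omega)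
    obtain ⟨L0, hL0⟩ := hS0
    obtain ⟨a, b, c0, hab, hL0eq, hv0⟩ := hfix L0 (hSA hL0)
    have key : ∀ L ∈ S, ∃ c : ℝ, L = lineSet a b c ∧
        ∀ q ∈ lineSet a b c, a * pev P q + b * pev Q q = 0 := by
      intro L hL
      obtain ⟨a', b', c', hab', hLeq, hv'⟩ := hfix L (hSA hL)
      obtain ⟨k, hk, ha', hb'⟩ : ∃ k, k ≠ 0 ∧ a' = k * a ∧ b' = k * b := by
        rcases hparS L0 hL0 L hL with h | h
        · exact eq_lineSet_prop hab hab' (by rw [← hL0eq, ← hLeq]; exact h)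
        · exact disjoint_lines_prop hab hab' (by rw [← hL0eq, ← hLeq]; exact h)
      have hLeq2 : L = lineSet a b (c' / k) := by
        have hkc : k * (c' / k) = c' := by field_simp
        have hsc : lineSet a b (c' / k) = lineSet (k * a) (k * b) (k * (c' / k)) :=
          (lineSet_scale hk).symm
        rw [hLeq, ha', hb', hsc, hkc]
      refine ⟨c' / k, hLeq2, ?_⟩
      intro q hq
      have hqL : q ∈ L := by rw [hLeq2]; exact hq
      have h0 := hv' q hqL
      rw [ha', hb'] at h0
      have hcomb : k * (a * pev P q + b * pev Q q) = 0 := by linear_combination h0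
      rcases mul_eq_zero.mp hcomb with h | h
      · exact absurd h hk
      · exact h
    choose cf hcf1 hcf2 using key
    have hinj : Function.Injective (fun L : {x // x ∈ S} => cf L.1 L.2) := by
      rintro ⟨L1, hL1⟩ ⟨L2, hL2⟩ h
      simp only at h
      apply Subtype.ext
      show L1 = L2
      rw [hcf1 L1 hL1, hcf1 L2 hL2, h]
    set cs : Finset ℝ := S.attach.image (fun L : {x // x ∈ S} => cf L.1 L.2) with hcs
    have hcscard : d < cs.card := by
      rw [hcs, Finset.card_image_of_injective _ hinj, Finset.card_attach]
      omega
    set R := MvPolynomial.C a * P + MvPolynomial.C b * Q with hR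
    have hRdeg : R.totalDegree ≤ d := by
      refine (totalDegree_add _ _).trans (max_le ?_ ?_) <;>
        refine (totalDegree_mul _ _).trans ?_ <;> rw [totalDegree_C, zero_add] <;> assumption
    have hpev : ∀ q, pev R q = a * pev P q + b * pev Q q := by
      intro q
      simp [pev, hR]
    have hvan : ∀ c ∈ cs, ∀ q ∈ lineSet a b c, pev R q = 0 := by
      intro c hc q hq
      obtain ⟨⟨L, hL⟩, -, rfl⟩ := Finset.mem_image.mp hc
      rw [hpev]
      exact hcf2 L hL q hq
    have hz := vanish_of_parallel R d hRdeg hab cs hcscard hvan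
    apply Set.infinite_of_injective_forall_mem (f := fun c : ℝ => lineSet a b c)
    · intro c c' h
      exact lineSet_c_inj hab h
    · intro c
      exact ⟨a, b, c, hab, rfl, fun q _ => by rw [← hpev]; exact hz q⟩
end

section
/- Let A be a nonempty line arrangement in ℝ² with |A| = n lines and maximal multiplicity m(A). Then the minimal degree of a nonzero central polynomial vector field fixing every line of A is exactly n − m(A) + 1: there exists a nonzero central vector field of degree n − m(A) + 1 fixing A, and every nonzero central vector field fixing A has degree at least n − m(A) + 1. -/
open MvPolynomial

noncomputable def homog : MvPolynomial (Fin 2) ℝ →ₐ[ℝ] Polynomial (MvPolynomial (Fin 2) ℝ) :=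
  aeval (fun i => Polynomial.C (X i) * Polynomial.X)

lemma homog_monomial (m : Fin 2 →₀ ℕ) (c : ℝ) :
    homog (monomial m c) = Polynomial.C (monomial m c) * Polynomial.X ^ (m.sum fun _ e => e) := by
  rw [homog, aeval_monomial]
  have h1 : (m.prod fun i k => (Polynomial.C (X i : MvPolynomial (Fin 2) ℝ) * Polynomial.X) ^ k)
      = Polynomial.C (m.prod fun i k => (X i : MvPolynomial (Fin 2) ℝ) ^ k) *
        Polynomial.X ^ (m.sum fun _ e => e) := by
    rw [Finsupp.prod, Finsupp.prod, Finsupp.sum, map_prod]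
    simp_rw [mul_pow, ← Polynomial.C_pow]
    rw [Finset.prod_mul_distrib, Finset.prod_pow_eq_pow_sum]
  rw [h1, monomial_eq]
  simp [algebraMap_eq, mul_assoc, Polynomial.C_mul]

lemma homog_coeff_totalDegree_ne_zero {f : MvPolynomial (Fin 2) ℝ} (hf : f ≠ 0) :
    (homog f).coeff f.totalDegree ≠ 0 := by
  obtain ⟨m₀, hm₀, hms⟩ := f.support.exists_mem_eq_sup
    (MvPolynomial.support_nonempty.mpr hf) (fun m => m.sum fun _ e => e)
  have key : ∀ k : ℕ, (homog f).coeff k =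
      ∑ m ∈ f.support, if k = (m.sum fun _ e => e) then monomial m (coeff m f) else 0 := by
    intro k
    conv_lhs => rw [f.as_sum, map_sum, Polynomial.finset_sum_coeff]
    refine Finset.sum_congr rfl fun m _ => ?_
    rw [homog_monomial, Polynomial.coeff_C_mul, Polynomial.coeff_X_pow]
    split_ifs <;> simp
  have hd : f.totalDegree = m₀.sum fun _ e => e := by rw [totalDegree]; exact hms
  intro h0
  have : MvPolynomial.coeff m₀ ((homog f).coeff f.totalDegree) = coeff m₀ f := by
    rw [key]
    rw [MvPolynomial.coeff_sum]
    rw [Finset.sum_eq_single_of_mem m₀ hm₀]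
    · rw [if_pos hd, coeff_monomial, if_pos rfl]
    · intro m hm hne
      split_ifs with h
      · rw [coeff_monomial, if_neg hne]
      · simp
  rw [h0] at this
  simp only [MvPolynomial.coeff_zero] at this
  exact (MvPolynomial.mem_support_iff.mp hm₀) this.symm

lemma homog_natDegree_le (f : MvPolynomial (Fin 2) ℝ) :
    (homog f).natDegree ≤ f.totalDegree := by
  conv_lhs => rw [f.as_sum, map_sum]
  refine Polynomial.natDegree_sum_le_of_forall_le _ _ fun m hm => ?_
  rw [homog_monomial]
  exact (Polynomial.natDegree_C_mul_X_pow_le _ _).trans (le_totalDegree hm)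

lemma homog_natDegree {f : MvPolynomial (Fin 2) ℝ} (hf : f ≠ 0) :
    (homog f).natDegree = f.totalDegree :=
  le_antisymm (homog_natDegree_le f)
    (Polynomial.le_natDegree_of_ne_zero (homog_coeff_totalDegree_ne_zero hf))

lemma homog_ne_zero {f : MvPolynomial (Fin 2) ℝ} (hf : f ≠ 0) : homog f ≠ 0 := by
  intro h
  exact homog_coeff_totalDegree_ne_zero hf (by rw [h, Polynomial.coeff_zero])

lemma totalDegree_mul_eq {f g : MvPolynomial (Fin 2) ℝ} (hf : f ≠ 0) (hg : g ≠ 0) :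
    (f * g).totalDegree = f.totalDegree + g.totalDegree := by
  rw [← homog_natDegree hf, ← homog_natDegree hg, ← homog_natDegree (mul_ne_zero hf hg),
    map_mul, Polynomial.natDegree_mul (homog_ne_zero hf) (homog_ne_zero hg)]
open MvPolynomial

noncomputable def lf (a b c : ℝ) : MvPolynomial (Fin 2) ℝ := C a * X 0 + C b * X 1 + C c

lemma lf_coeff0 (a b c : ℝ) : coeff (Finsupp.single 0 1) (lf a b c) = a := by
  simp [lf, coeff_X', Finsupp.single_eq_single_iff, eq_comm, Finsupp.single_eq_zero]

lemma lf_coeff1 (a b c : ℝ) : coeff (Finsupp.single 1 1) (lf a b c) = b := by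
  simp [lf, coeff_X', Finsupp.single_eq_single_iff, eq_comm, Finsupp.single_eq_zero]

lemma pev_lf (a b c : ℝ) (q : ℝ × ℝ) : pev (lf a b c) q = a * q.1 + b * q.2 + c := by
  simp [pev, lf]

lemma pev_mul (f g : MvPolynomial (Fin 2) ℝ) (q : ℝ × ℝ) :
    pev (f * g) q = pev f q * pev g q := by simp [pev]

lemma ne_or_of_pair {a b : ℝ} (hab : (a, b) ≠ (0, 0)) : a ≠ 0 ∨ b ≠ 0 := by
  by_contra h
  push_neg at h
  exact hab (by simp [Prod.ext_iff, h.1, h.2])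

lemma lf_ne_zero {a b c : ℝ} (hab : (a, b) ≠ (0, 0)) : lf a b c ≠ 0 := by
  intro h
  rcases ne_or_of_pair hab with ha | hb
  · exact ha (by rw [← lf_coeff0 a b c, h, coeff_zero])
  · exact hb (by rw [← lf_coeff1 a b c, h, coeff_zero])

lemma totalDegree_lf {a b c : ℝ} (hab : (a, b) ≠ (0, 0)) : (lf a b c).totalDegree = 1 := by
  refine le_antisymm ?_ ?_
  · refine (totalDegree_add _ _).trans ?_
    simp only [max_le_iff]
    refine ⟨(totalDegree_add _ _).trans ?_, by simp [totalDegree_C]⟩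
    simp only [max_le_iff]
    constructor <;>
    · refine (totalDegree_mul _ _).trans ?_
      simp [totalDegree_X]
  · rcases ne_or_of_pair hab with h | h
    · have := le_totalDegree (p := lf a b c) (s := Finsupp.single 0 1)
        (by rw [MvPolynomial.mem_support_iff, lf_coeff0]; exact h)
      simpa using this
    · have := le_totalDegree (p := lf a b c) (s := Finsupp.single 1 1)
        (by rw [MvPolynomial.mem_support_iff, lf_coeff1]; exact h)
      simpa using this

lemma X1_dvd_sub_aeval (g : MvPolynomial (Fin 2) ℝ) :
    X 1 ∣ g - aeval ![X 0, 0] g := by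
  induction g using MvPolynomial.induction_on with
  | C r => simp
  | add p q hp hq =>
    have : p + q - aeval ![X 0, 0] (p + q)
        = (p - aeval ![X 0, 0] p) + (q - aeval ![X 0, 0] q) := by
      rw [map_add]; ring
    rw [this]; exact dvd_add hp hq
  | mul_X p i hp =>
    rw [map_mul, aeval_X]
    fin_cases i
    · show X 1 ∣ p * X 0 - aeval ![X 0, 0] p * X 0
      rw [show p * X 0 - aeval ![X 0, 0] p * X 0 = (p - aeval ![X 0, 0] p) * X 0 by ring]
      exact hp.mul_right _
    · show X 1 ∣ p * X 1 - aeval ![X 0, 0] p * 0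
      rw [mul_zero, sub_zero]
      exact dvd_mul_left _ _

lemma X1_dvd_of_vanish (g : MvPolynomial (Fin 2) ℝ)
    (h : {x : ℝ | pev g (x, 0) ≠ 0}.Finite) : X 1 ∣ g := by
  set j : Polynomial ℝ := MvPolynomial.aeval ![Polynomial.X, 0] g with hj
  have hev : ∀ x : ℝ, Polynomial.eval x j = pev g (x, 0) := by
    intro x
    have hc := comp_aeval_apply (R := ℝ) (f := ![Polynomial.X, 0]) (Polynomial.aeval x) g
    rw [hj, ← Polynomial.coe_aeval_eq_eval, hc]
    have : (fun i => (Polynomial.aeval x : Polynomial ℝ →ₐ[ℝ] ℝ) (![Polynomial.X, 0] i))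
        = ![x, 0] := by
      funext i; fin_cases i <;> simp
    rw [this, pev]
    exact DFunLike.congr_fun (MvPolynomial.coe_aeval_eq_eval ![x, 0]) g
  have hj0 : j = 0 := by
    refine Polynomial.eq_zero_of_infinite_isRoot j ?_
    refine Set.Infinite.mono ?_ h.infinite_compl
    intro x hx
    simp only [Set.mem_compl_iff, Set.mem_setOf_eq, not_not] at hx
    simpa [Polynomial.IsRoot, hev x] using hx
  have hr : (aeval ![X 0, 0] g : MvPolynomial (Fin 2) ℝ) = 0 := by
    have hc := comp_aeval_apply (R := ℝ) (f := ![Polynomial.X, 0])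
      (Polynomial.aeval (X 0 : MvPolynomial (Fin 2) ℝ)) g
    have hv : (fun i => (Polynomial.aeval (X 0 : MvPolynomial (Fin 2) ℝ) :
          Polynomial ℝ →ₐ[ℝ] MvPolynomial (Fin 2) ℝ) (![Polynomial.X, 0] i))
        = ![X 0, 0] := by
      funext i; fin_cases i <;> simp
    rw [← hv, ← hc, ← hj, hj0, map_zero]
  have := X1_dvd_sub_aeval g
  rwa [hr, sub_zero] at this

lemma lf_dvd_of_vanish {a b c : ℝ} (hab : (a, b) ≠ (0, 0)) (f : MvPolynomial (Fin 2) ℝ)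
    (hv : {q : ℝ × ℝ | q ∈ lineSet a b c ∧ pev f q ≠ 0}.Finite) : lf a b c ∣ f := by
  by_cases hb : b ≠ 0
  · set Φv : Fin 2 → MvPolynomial (Fin 2) ℝ :=
      ![X 0, C b⁻¹ * (X 1 - C a * X 0 - C c)] with hΦv
    set Ψv : Fin 2 → MvPolynomial (Fin 2) ℝ :=
      ![X 0, C b * X 1 + C a * X 0 + C c] with hΨv
    have hΨΦ : ∀ p : MvPolynomial (Fin 2) ℝ, aeval Ψv (aeval Φv p) = p := by
      intro p
      rw [comp_aeval_apply (R := ℝ) (f := Φv) (aeval Ψv) p]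
      have : (fun i => aeval Ψv (Φv i)) = X := by
        funext i
        fin_cases i
        · show aeval Ψv (X 0) = X 0
          rw [aeval_X, hΨv]
          rfl
        · show aeval Ψv (C b⁻¹ * (X 1 - C a * X 0 - C c)) = X 1
          rw [map_mul, map_sub, map_sub, map_mul, aeval_X, aeval_X, aeval_C, aeval_C, aeval_C]
          show (C b⁻¹ : MvPolynomial (Fin 2) ℝ) * (C b * X 1 + C a * X 0 + C c - C a * X 0 - C c)
            = X 1
          rw [show (C b * X 1 + C a * X 0 + C c - C a * X 0 - C c : MvPolynomial (Fin 2) ℝ)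
            = C b * X 1 by ring, ← mul_assoc, ← C_mul, inv_mul_cancel₀ hb, C_1, one_mul]
      rw [this, aeval_X_left_apply]
    have hev : ∀ x : ℝ, pev (aeval Φv f) (x, 0) = pev f (x, b⁻¹ * (0 - a * x - c)) := by
      intro x
      have h1 : pev (aeval Φv f) (x, 0) = aeval ![x, (0:ℝ)] (aeval Φv f) :=
        (DFunLike.congr_fun (MvPolynomial.coe_aeval_eq_eval ![x, (0:ℝ)]) (aeval Φv f)).symm
      rw [h1, comp_aeval_apply (R := ℝ) (f := Φv) (aeval ![x, (0:ℝ)]) f]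
      have : (fun i => aeval ![x, (0:ℝ)] (Φv i)) = ![x, b⁻¹ * (0 - a * x - c)] := by
        funext i
        fin_cases i
        · show aeval ![x, (0:ℝ)] (X 0) = x
          rw [aeval_X]; rfl
        · show aeval ![x, (0:ℝ)] (C b⁻¹ * (X 1 - C a * X 0 - C c)) = b⁻¹ * (0 - a * x - c)
          rw [map_mul, map_sub, map_sub, map_mul, aeval_X, aeval_X, aeval_C, aeval_C, aeval_C]
          rfl
      rw [this]
      exact DFunLike.congr_fun (MvPolynomial.coe_aeval_eq_eval ![x, b⁻¹ * (0 - a * x - c)]) f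
    have hX1 : X 1 ∣ aeval Φv f := by
      apply X1_dvd_of_vanish
      have hsub : {x : ℝ | pev (aeval Φv f) (x, 0) ≠ 0} ⊆
          (fun x : ℝ => (x, b⁻¹ * (0 - a * x - c))) ⁻¹'
            {q : ℝ × ℝ | q ∈ lineSet a b c ∧ pev f q ≠ 0} := by
        intro x hx
        simp only [Set.mem_setOf_eq, hev x] at hx
        refine ⟨?_, hx⟩
        show a * x + b * (b⁻¹ * (0 - a * x - c)) + c = 0
        field_simp
        ring
      refine Set.Finite.subset (Set.Finite.preimage ?_ hv) hsub
      exact Set.injOn_of_injective (fun x y hxy => congrArg Prod.fst hxy)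
    obtain ⟨k, hk⟩ := hX1
    refine ⟨aeval Ψv k, ?_⟩
    conv_lhs => rw [← hΨΦ f, hk]
    rw [map_mul, aeval_X]
    show (C b * X 1 + C a * X 0 + C c) * aeval Ψv k = lf a b c * aeval Ψv k
    rw [lf]; ring
  · push_neg at hb
    subst hb
    have ha : a ≠ 0 := by
      rcases ne_or_of_pair hab with h | h
      · exact h
      · exact absurd rfl h
    set Φv : Fin 2 → MvPolynomial (Fin 2) ℝ := ![C a⁻¹ * (X 1 - C c), X 0] with hΦv
    set Ψv : Fin 2 → MvPolynomial (Fin 2) ℝ := ![X 1, C a * X 0 + C c] with hΨv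
    have hΨΦ : ∀ p : MvPolynomial (Fin 2) ℝ, aeval Ψv (aeval Φv p) = p := by
      intro p
      rw [comp_aeval_apply (R := ℝ) (f := Φv) (aeval Ψv) p]
      have : (fun i => aeval Ψv (Φv i)) = X := by
        funext i
        fin_cases i
        · show aeval Ψv (C a⁻¹ * (X 1 - C c)) = X 0
          rw [map_mul, map_sub, aeval_X, aeval_C, aeval_C]
          show (C a⁻¹ : MvPolynomial (Fin 2) ℝ) * (C a * X 0 + C c - C c) = X 0
          rw [show (C a * X 0 + C c - C c : MvPolynomial (Fin 2) ℝ) = C a * X 0 by ring,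
            ← mul_assoc, ← C_mul, inv_mul_cancel₀ ha, C_1, one_mul]
        · show aeval Ψv (X 0) = X 1
          rw [aeval_X, hΨv]
          rfl
      rw [this, aeval_X_left_apply]
    have hev : ∀ x : ℝ, pev (aeval Φv f) (x, 0) = pev f (a⁻¹ * (0 - c), x) := by
      intro x
      have h1 : pev (aeval Φv f) (x, 0) = aeval ![x, (0:ℝ)] (aeval Φv f) :=
        (DFunLike.congr_fun (MvPolynomial.coe_aeval_eq_eval ![x, (0:ℝ)]) (aeval Φv f)).symm
      rw [h1, comp_aeval_apply (R := ℝ) (f := Φv) (aeval ![x, (0:ℝ)]) f]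
      have : (fun i => aeval ![x, (0:ℝ)] (Φv i)) = ![a⁻¹ * (0 - c), x] := by
        funext i
        fin_cases i
        · show aeval ![x, (0:ℝ)] (C a⁻¹ * (X 1 - C c)) = a⁻¹ * (0 - c)
          rw [map_mul, map_sub, aeval_X, aeval_C, aeval_C]
          rfl
        · show aeval ![x, (0:ℝ)] (X 0) = x
          rw [aeval_X]; rfl
      rw [this]
      exact DFunLike.congr_fun (MvPolynomial.coe_aeval_eq_eval ![a⁻¹ * (0 - c), x]) f
    have hX1 : X 1 ∣ aeval Φv f := by
      apply X1_dvd_of_vanish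
      have hsub : {x : ℝ | pev (aeval Φv f) (x, 0) ≠ 0} ⊆
          (fun x : ℝ => ((a⁻¹ * (0 - c), x) : ℝ × ℝ)) ⁻¹'
            {q : ℝ × ℝ | q ∈ lineSet a 0 c ∧ pev f q ≠ 0} := by
        intro x hx
        simp only [Set.mem_setOf_eq, hev x] at hx
        refine ⟨?_, hx⟩
        show a * (a⁻¹ * (0 - c)) + 0 * x + c = 0
        field_simp
        ring
      refine Set.Finite.subset (Set.Finite.preimage ?_ hv) hsub
      exact Set.injOn_of_injective (fun x y hxy => congrArg Prod.snd hxy)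
    obtain ⟨k, hk⟩ := hX1
    refine ⟨aeval Ψv k, ?_⟩
    conv_lhs => rw [← hΨΦ f, hk]
    rw [map_mul, aeval_X]
    show (C a * X 0 + C c) * aeval Ψv k = lf a 0 c * aeval Ψv k
    rw [lf]; ring_nf
    rw [map_zero]; ring

lemma line_inter_subsingleton {L L' : Set (ℝ × ℝ)} (hL : IsLine L) (hL' : IsLine L')
    (hne : L ≠ L') : (L ∩ L').Subsingleton := by
  obtain ⟨a, b, c, hab, rfl⟩ := hL
  obtain ⟨a', b', c', hab', rfl⟩ := hL'
  intro p hp q hq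
  by_contra hpq
  apply hne
  have hp1 : a * p.1 + b * p.2 + c = 0 := hp.1
  have hp2 : a' * p.1 + b' * p.2 + c' = 0 := hp.2
  have hq1 : a * q.1 + b * q.2 + c = 0 := hq.1
  have hq2 : a' * q.1 + b' * q.2 + c' = 0 := hq.2
  have e1 : a * (p.1 - q.1) + b * (p.2 - q.2) = 0 := by linear_combination hp1 - hq1
  have e2 : a' * (p.1 - q.1) + b' * (p.2 - q.2) = 0 := by linear_combination hp2 - hq2
  have hd : p.1 - q.1 ≠ 0 ∨ p.2 - q.2 ≠ 0 := by
    by_contra h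
    push_neg at h
    exact hpq (Prod.ext (by linarith [h.1]) (by linarith [h.2]))
  have key : ∃ l : ℝ, l ≠ 0 ∧ a' = l * a ∧ b' = l * b ∧ c' = l * c := by
    rcases hd with hd1 | hd2
    · have hb : b ≠ 0 := by
        intro h0
        have ha : a = 0 := by
          have : a * (p.1 - q.1) = 0 := by linear_combination e1 - (p.2 - q.2) * h0
          exact (mul_eq_zero.mp this).resolve_right hd1
        exact hab (by simp [Prod.ext_iff, ha, h0])
      have hb' : b' ≠ 0 := by
        intro h0
        have ha' : a' = 0 := by
          have : a' * (p.1 - q.1) = 0 := by linear_combination e2 - (p.2 - q.2) * h0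
          exact (mul_eq_zero.mp this).resolve_right hd1
        exact hab' (by simp [Prod.ext_iff, ha', h0])
      have h3 : a' * b = b' * a := by
        have h30 : (a' * b - b' * a) * (p.1 - q.1) = 0 := by
          linear_combination b * e2 - b' * e1
        have := (mul_eq_zero.mp h30).resolve_right hd1
        linarith
      refine ⟨b' / b, div_ne_zero hb' hb, ?_, ?_, ?_⟩
      · field_simp
        linear_combination h3
      · field_simp
      · field_simp
        linear_combination b * hp2 - b' * hp1 - p.1 * h3
    · have ha : a ≠ 0 := by
        intro h0
        have hb : b = 0 := by
          have : b * (p.2 - q.2) = 0 := by linear_combination e1 - (p.1 - q.1) * h0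
          exact (mul_eq_zero.mp this).resolve_right hd2
        exact hab (by simp [Prod.ext_iff, h0, hb])
      have ha' : a' ≠ 0 := by
        intro h0
        have hb' : b' = 0 := by
          have : b' * (p.2 - q.2) = 0 := by linear_combination e2 - (p.1 - q.1) * h0
          exact (mul_eq_zero.mp this).resolve_right hd2
        exact hab' (by simp [Prod.ext_iff, h0, hb'])
      have h3 : b' * a = a' * b := by
        have h30 : (b' * a - a' * b) * (p.2 - q.2) = 0 := by
          linear_combination a * e2 - a' * e1
        have := (mul_eq_zero.mp h30).resolve_right hd2
        linarith
      refine ⟨a' / a, div_ne_zero ha' ha, ?_, ?_, ?_⟩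
      · field_simp
      · field_simp
        linear_combination h3
      · field_simp
        linear_combination a * hp2 - a' * hp1 - p.2 * h3
  obtain ⟨l, hl, rfl, rfl, rfl⟩ := key
  ext z
  simp only [lineSet, Set.mem_setOf_eq]
  constructor
  · intro h
    linear_combination l * h
  · intro h
    have : l * (a * z.1 + b * z.2 + c) = 0 := by linear_combination h
    have := (mul_eq_zero.mp this).resolve_left hl
    linarith

lemma pev_prod (S : Finset (Set (ℝ × ℝ))) (f : Set (ℝ × ℝ) → MvPolynomial (Fin 2) ℝ)
    (q : ℝ × ℝ) : pev (∏ L ∈ S, f L) q = ∏ L ∈ S, pev (f L) q := by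
  simp only [pev]
  exact map_prod (eval ![q.1, q.2]) _ S

lemma X0_sub_C_eq (r : ℝ) : (X 0 - C r : MvPolynomial (Fin 2) ℝ) = lf 1 0 (-r) := by
  rw [lf, C_1, C_0, map_neg]; ring

lemma X1_sub_C_eq (r : ℝ) : (X 1 - C r : MvPolynomial (Fin 2) ℝ) = lf 0 1 (-r) := by
  rw [lf, C_1, C_0, map_neg]; ring

lemma pair10 : ((1 : ℝ), (0 : ℝ)) ≠ (0, 0) := by norm_num [Prod.ext_iff]

lemma pair01 : ((0 : ℝ), (1 : ℝ)) ≠ (0, 0) := by norm_num [Prod.ext_iff]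

lemma card_le_totalDegree_of_vanish (S : Finset (Set (ℝ × ℝ))) :
    ∀ g : MvPolynomial (Fin 2) ℝ, g ≠ 0 → (∀ L ∈ S, IsLine L) →
    (∀ L ∈ S, {q : ℝ × ℝ | q ∈ L ∧ pev g q ≠ 0}.Finite) → S.card ≤ g.totalDegree := by
  classical
  induction S using Finset.induction_on with
  | empty => intro g hg _ _; simp
  | @insert L S hLS ih =>
    intro g hg hlines hvan
    obtain ⟨a, b, c, hab, hLeq⟩ := hlines L (Finset.mem_insert_self L S)
    have hdvd : lf a b c ∣ g := by
      apply lf_dvd_of_vanish hab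
      rw [← hLeq]
      exact hvan L (Finset.mem_insert_self L S)
    obtain ⟨g', rfl⟩ := hdvd
    have hg' : g' ≠ 0 := right_ne_zero_of_mul hg
    have hS : S.card ≤ g'.totalDegree := by
      apply ih g' hg' (fun L' hL' => hlines L' (Finset.mem_insert_of_mem hL'))
      intro L' hL'
      have hsub : {q : ℝ × ℝ | q ∈ L' ∧ pev g' q ≠ 0} ⊆
          {q : ℝ × ℝ | q ∈ L' ∧ pev (lf a b c * g') q ≠ 0} ∪ (L ∩ L') := by
        intro q hq
        by_cases h0 : pev (lf a b c * g') q ≠ 0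
        · exact Or.inl ⟨hq.1, h0⟩
        · push_neg at h0
          rw [pev_mul] at h0
          have hlfq : pev (lf a b c) q = 0 := by
            rcases mul_eq_zero.mp h0 with h | h
            · exact h
            · exact absurd h hq.2
          refine Or.inr ⟨?_, hq.1⟩
          rw [hLeq]
          show a * q.1 + b * q.2 + c = 0
          rw [← pev_lf a b c q]; exact hlfq
      refine Set.Finite.subset (Set.Finite.union (hvan L' (Finset.mem_insert_of_mem hL')) ?_) hsub
      exact (line_inter_subsingleton ⟨a, b, c, hab, hLeq⟩
        (hlines L' (Finset.mem_insert_of_mem hL'))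
        (fun h => hLS (h ▸ hL'))).finite
    rw [Finset.card_insert_of_notMem hLS,
      totalDegree_mul_eq (lf_ne_zero hab) hg', totalDegree_lf hab]
    omega

lemma prod_lf_props (S : Finset (Set (ℝ × ℝ))) (fa fb fc : Set (ℝ × ℝ) → ℝ) :
    (∀ L ∈ S, (fa L, fb L) ≠ ((0 : ℝ), (0 : ℝ))) →
    (∏ L ∈ S, lf (fa L) (fb L) (fc L)) ≠ 0 ∧
      (∏ L ∈ S, lf (fa L) (fb L) (fc L)).totalDegree = S.card := by
  classical
  induction S using Finset.induction_on with
  | empty => intro _; simp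
  | @insert L S hLS ih =>
    intro h
    obtain ⟨hne, hdeg⟩ := ih (fun L' hL' => h L' (Finset.mem_insert_of_mem hL'))
    have hlf := lf_ne_zero (c := fc L) (h L (Finset.mem_insert_self L S))
    rw [Finset.prod_insert hLS]
    refine ⟨mul_ne_zero hlf hne, ?_⟩
    rw [totalDegree_mul_eq hlf hne, totalDegree_lf (h L (Finset.mem_insert_self L S)), hdeg,
      Finset.card_insert_of_notMem hLS]
    omega
/-- **Proposition.** The minimal degree of a nonzero central vector field fixing a
nonempty line arrangement `A` with `n` lines is exactly `n - m(A) + 1`: such a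
central vector field of degree `n - m(A) + 1` exists, and every nonzero central
vector field fixing `A` has degree at least `n - m(A) + 1`. -/
theorem central_minimal_degree
    (A : Finset (Set (ℝ × ℝ))) (hA : ∀ L ∈ A, IsLine L) (hne : A.Nonempty) :
    (∃ P Q : MvPolynomial (Fin 2) ℝ, IsCentral P Q ∧
        max P.totalDegree Q.totalDegree = A.card - mArr A + 1 ∧
        ∀ L ∈ A, InvLine P Q L) ∧
    (∀ P Q : MvPolynomial (Fin 2) ℝ, IsCentral P Q → (∀ L ∈ A, InvLine P Q L) →
        A.card - mArr A + 1 ≤ max P.totalDegree Q.totalDegree) := by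
  classical
  have hforms : ∀ L : Set (ℝ × ℝ), ∃ a b c : ℝ,
      L ∈ A → ((a, b) ≠ ((0 : ℝ), (0 : ℝ)) ∧ L = lineSet a b c) := by
    intro L
    by_cases hL : L ∈ A
    · obtain ⟨a, b, c, h1, h2⟩ := hA L hL
      exact ⟨a, b, c, fun _ => ⟨h1, h2⟩⟩
    · exact ⟨1, 0, 0, fun h => absurd h hL⟩
  choose fa fb fc hf using hforms
  have hbdd : BddAbove (Set.range (numThrough A)) := by
    refine ⟨A.card, ?_⟩
    rintro k ⟨q, rfl⟩
    simpa [numThrough] using Finset.card_filter_le A (fun L => q ∈ L)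
  obtain ⟨q₀, hq₀⟩ : ∃ q₀ : ℝ × ℝ, numThrough A q₀ = mArr A := by
    obtain ⟨q₀, h⟩ := Nat.sSup_mem (s := Set.range (numThrough A))
      ⟨numThrough A (0, 0), ⟨(0, 0), rfl⟩⟩ hbdd
    exact ⟨q₀, h⟩
  have hcardpart : ∀ q : ℝ × ℝ,
      numThrough A q + (A.filter (fun L => q ∉ L)).card = A.card := by
    intro q
    have h := Finset.card_filter_add_card_filter_not (s := A) (p := fun L => q ∈ L)
    simpa [numThrough] using h
  constructor
  · -- existence
    set S : Finset (Set (ℝ × ℝ)) := A.filter (fun L => q₀ ∉ L) with hSdef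
    set h : MvPolynomial (Fin 2) ℝ := ∏ L ∈ S, lf (fa L) (fb L) (fc L) with hh
    have hSforms : ∀ L ∈ S, (fa L, fb L) ≠ ((0 : ℝ), (0 : ℝ)) :=
      fun L hL => (hf L (Finset.mem_filter.mp hL).1).1
    obtain ⟨hh0, hhdeg⟩ := prod_lf_props S fa fb fc hSforms
    have hPfac : (X 0 - C q₀.1 : MvPolynomial (Fin 2) ℝ) ≠ 0 := by
      rw [X0_sub_C_eq]; exact lf_ne_zero pair10
    have hQfac : (X 1 - C q₀.2 : MvPolynomial (Fin 2) ℝ) ≠ 0 := by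
      rw [X1_sub_C_eq]; exact lf_ne_zero pair01
    have hPne : (X 0 - C q₀.1) * h ≠ 0 := mul_ne_zero hPfac hh0
    have hQne : (X 1 - C q₀.2) * h ≠ 0 := mul_ne_zero hQfac hh0
    have hdegP : ((X 0 - C q₀.1) * h).totalDegree = 1 + S.card := by
      rw [totalDegree_mul_eq hPfac hh0, X0_sub_C_eq, totalDegree_lf pair10, hhdeg]
    have hdegQ : ((X 1 - C q₀.2) * h).totalDegree = 1 + S.card := by
      rw [totalDegree_mul_eq hQfac hh0, X1_sub_C_eq, totalDegree_lf pair01, hhdeg]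
    refine ⟨(X 0 - C q₀.1) * h, (X 1 - C q₀.2) * h,
      ⟨Or.inl hPne, ⟨q₀, by ring⟩⟩, ?_, ?_⟩
    · rw [hdegP, hdegQ, max_self]
      have h1 := hcardpart q₀
      rw [hq₀, ← hSdef] at h1
      omega
    · intro L hL
      refine ⟨fa L, fb L, fc L, (hf L hL).1, (hf L hL).2, ?_⟩
      intro q hq
      have hqline : fa L * q.1 + fb L * q.2 + fc L = 0 := by
        rw [(hf L hL).2] at hq; exact hq
      have hP : pev ((X 0 - C q₀.1) * h) q = (q.1 - q₀.1) * pev h q := by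
        rw [pev_mul]
        simp [pev]
      have hQ : pev ((X 1 - C q₀.2) * h) q = (q.2 - q₀.2) * pev h q := by
        rw [pev_mul]
        simp [pev]
      rw [hP, hQ]
      by_cases hq₀L : q₀ ∈ L
      · have h0 : fa L * q₀.1 + fb L * q₀.2 + fc L = 0 := by
          rw [(hf L hL).2] at hq₀L; exact hq₀L
        have hkey : fa L * ((q.1 - q₀.1) * pev h q) + fb L * ((q.2 - q₀.2) * pev h q)
            = (fa L * q.1 + fb L * q.2 + fc L - (fa L * q₀.1 + fb L * q₀.2 + fc L))
              * pev h q := by ring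
        rw [hkey, hqline, h0]; ring
      · have hLS : L ∈ S := Finset.mem_filter.mpr ⟨hL, hq₀L⟩
        have hz : pev h q = 0 := by
          rw [hh, pev_prod]
          exact Finset.prod_eq_zero hLS (by rw [pev_lf]; exact hqline)
        rw [hz]; ring
  · -- lower bound
    rintro P Q ⟨hnz, c, hid⟩ hinv
    have hX0ne : (X 0 - C c.1 : MvPolynomial (Fin 2) ℝ) ≠ 0 := by
      rw [X0_sub_C_eq]; exact lf_ne_zero pair10
    have hPne : P ≠ 0 := by
      intro h0
      rw [h0, mul_zero] at hid
      rcases mul_eq_zero.mp hid with h | h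
      · exact hX0ne h
      · rcases hnz with h' | h'
        · exact h' h0
        · exact h' h
    have hev : ∀ q : ℝ × ℝ, (q.1 - c.1) * pev Q q = (q.2 - c.2) * pev P q := by
      intro q
      have h := congrArg (fun f => pev f q) hid
      simpa [pev] using h
    have hdvd : lf 1 0 (-c.1) ∣ P := by
      apply lf_dvd_of_vanish pair10
      refine Set.Finite.subset (Set.finite_singleton (c.1, c.2)) ?_
      intro q hq
      have hq1 : q.1 = c.1 := by
        have := hq.1
        simp only [lineSet, Set.mem_setOf_eq] at this
        linarith
      have h2 := hev q
      rw [hq1, sub_self, zero_mul] at h2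
      rcases mul_eq_zero.mp h2.symm with h | h
      · have hq2 : q.2 = c.2 := by linarith
        simp [Prod.ext_iff, hq1, hq2]
      · exact absurd h hq.2
    obtain ⟨g, hPg0⟩ := hdvd
    have hPg : P = (X 0 - C c.1) * g := by rw [hPg0, X0_sub_C_eq]
    have hgne : g ≠ 0 := by
      intro h0
      exact hPne (by rw [hPg, h0, mul_zero])
    have hQg : Q = (X 1 - C c.2) * g := by
      apply mul_left_cancel₀ hX0ne
      rw [hid, hPg]; ring
    set S : Finset (Set (ℝ × ℝ)) := A.filter (fun L => c ∉ L) with hSdef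
    have hvan : ∀ L ∈ S, {q : ℝ × ℝ | q ∈ L ∧ pev g q ≠ 0}.Finite := by
      intro L hLS
      obtain ⟨hLA, hcL⟩ := Finset.mem_filter.mp hLS
      obtain ⟨a, b, c', habc, hLeq, hzero⟩ := hinv L hLA
      have ht : a * c.1 + b * c.2 + c' ≠ 0 := by
        intro h0
        exact hcL (by rw [hLeq]; exact h0)
      have hallz : ∀ q ∈ L, pev g q = 0 := by
        intro q hqL
        have h1 := hzero q hqL
        have hql : a * q.1 + b * q.2 + c' = 0 := by rw [hLeq] at hqL; exact hqL
        have hPq : pev P q = (q.1 - c.1) * pev g q := by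
          rw [hPg, pev_mul]; simp [pev]
        have hQq : pev Q q = (q.2 - c.2) * pev g q := by
          rw [hQg, pev_mul]; simp [pev]
        rw [hPq, hQq] at h1
        have hkey : (a * q.1 + b * q.2 + c' - (a * c.1 + b * c.2 + c')) * pev g q = 0 := by
          linear_combination h1
        rw [hql, zero_sub, neg_mul, neg_eq_zero] at hkey
        exact (mul_eq_zero.mp hkey).resolve_left ht
      refine Set.Finite.subset Set.finite_empty ?_
      intro q hq
      exact absurd (hallz q hq.1) hq.2
    have hcount : S.card ≤ g.totalDegree :=
      card_le_totalDegree_of_vanish S g hgne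
        (fun L hL => hA L (Finset.mem_filter.mp hL).1) hvan
    have hft : numThrough A c ≤ mArr A := le_csSup hbdd ⟨c, rfl⟩
    have hpart := hcardpart c
    rw [← hSdef] at hpart
    have hdegP : P.totalDegree = 1 + g.totalDegree := by
      rw [hPg, totalDegree_mul_eq hX0ne hgne, X0_sub_C_eq, totalDegree_lf pair10]
    have hfin : A.card - mArr A + 1 ≤ P.totalDegree := by omega
    exact hfin.trans (le_max_left _ _)
end
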